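/- Let G be a group with a finite symmetric generating set S, and let L be a set of words over S such that the evaluation map μ : L → G (sending a word to its product in G) is bijective. Suppose there are constants k, K > 0 such that: (i) any u, v ∈ L with d_S(μ(u), μ(v)) ≤ 1 satisfy the k-fellow traveler property; and (ii) |L(u) − L(v)| ≤ K whenever u, v ∈ L satisfy d_S(μ(u), μ(v)) = 1. Let R be the (finite) set of all words over S of length at most 2k+2 that represent the identity e. Then the normal closure of R in F_S equals the kernel of μ : F_S → G, and there exists a constant C > 0 (depending only on k, K and the length of the word of L representing e) such that every word w = s₁⋯sₙ over S representing e satisfies Area_R(w) ≤ C · Σ_{i=1}^n (d_S(w̄(i), e) + 1). -/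

import Mathlib

open scoped Pointwise

/-- The product in `G` of a word over the subset `S ⊆ G`. -/
def wordProd {G : Type*} [Group G] (S : Set G) (w : List S) : G :=
  (w.map (fun s => (s : G))).prod

/-- The word metric `d_S(a,b)`: the least `n` such that `b⁻¹ * a` is a product of
`n` elements of `S`. -/
noncomputable def wordDist {G : Type*} [Group G] (S : Set G) (a b : G) : ℕ :=
  sInf {n | ∃ w : List S, w.length = n ∧ wordProd S w = b⁻¹ * a}

/-- The evaluation homomorphism `μ : F_S → G` from the free group on `S`. -/
noncomputable def muEval {G : Type*} [Group G] (S : Set G) : FreeGroup S →* G :=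
  FreeGroup.lift (fun s => (s : G))

/-- A word over `S`, regarded as an element of the free group `F_S`. -/
def wordToFree {G : Type*} [Group G] (S : Set G) (w : List S) : FreeGroup S :=
  (w.map FreeGroup.of).prod

/-- The combinatorial area of a word `w` over `S` with respect to the relator set
`R ⊆ F_S`: the least `k` such that `w = ∏_{i=1}^k vᵢ rᵢ vᵢ⁻¹` in `F_S` with each
`rᵢ ∈ R` or `rᵢ⁻¹ ∈ R`. -/
noncomputable def area {G : Type*} [Group G] (S : Set G) (R : Set (FreeGroup S))
    (w : List S) : ℕ :=
  sInf {k | ∃ v r : Fin k → FreeGroup S,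
    (∀ i, r i ∈ R ∨ (r i)⁻¹ ∈ R) ∧
    wordToFree S w = (List.ofFn (fun i => v i * r i * (v i)⁻¹)).prod}

set_option linter.unusedSectionVars false
section AuxDev
variable {G : Type*} [Group G] {S : Set G}

lemma wordProd_append (u v : List S) :
    wordProd S (u ++ v) = wordProd S u * wordProd S v := by
  simp [wordProd]

lemma wordToFree_append (u v : List S) :
    wordToFree S (u ++ v) = wordToFree S u * wordToFree S v := by
  simp [wordToFree]

lemma wordToFree_nil : wordToFree S ([] : List S) = 1 := rfl
lemma wordProd_nil : wordProd S ([] : List S) = 1 := rfl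
lemma wordProd_singleton (s : S) : wordProd S [s] = (s : G) := by simp [wordProd]
lemma wordToFree_singleton (s : S) : wordToFree S [s] = FreeGroup.of s := by
  simp [wordToFree]

lemma muEval_wordToFree (w : List S) : muEval S (wordToFree S w) = wordProd S w := by
  induction w with
  | nil => simp [wordToFree, wordProd]
  | cons a l ih =>
    have : wordToFree S (a :: l) = FreeGroup.of a * wordToFree S l := by
      simp [wordToFree]
    rw [this, map_mul, ih]
    have h2 : muEval S (FreeGroup.of a) = (a : G) := FreeGroup.lift_apply_of
    rw [h2]
    simp [wordProd]

def sInv (h : S⁻¹ = S) (s : S) : S :=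
  ⟨(s : G)⁻¹, by
    have h2 : ((s : G))⁻¹ ∈ S⁻¹ := Set.inv_mem_inv.mpr s.2
    rwa [h] at h2⟩

@[simp] lemma sInv_coe (h : S⁻¹ = S) (s : S) : ((sInv h s : S) : G) = (s : G)⁻¹ := rfl

def revinv (h : S⁻¹ = S) (l : List S) : List S := (l.map (sInv h)).reverse

@[simp] lemma length_revinv (h : S⁻¹ = S) (l : List S) :
    (revinv h l).length = l.length := by simp [revinv]

lemma wordProd_revinv (h : S⁻¹ = S) (l : List S) :
    wordProd S (revinv h l) = (wordProd S l)⁻¹ := by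
  induction l with
  | nil => simp [revinv, wordProd]
  | cons a l ih =>
    have h1 : revinv h (a :: l) = revinv h l ++ [sInv h a] := by simp [revinv]
    have h2 : wordProd S (a :: l) = (a : G) * wordProd S l := by simp [wordProd]
    rw [h1, wordProd_append, ih, h2, wordProd_singleton]
    simp [mul_inv_rev]

lemma conj_prod (g : FreeGroup S) (l : List (FreeGroup S)) :
    (l.map (fun y => g * y * g⁻¹)).prod = g * l.prod * g⁻¹ := by
  induction l with
  | nil => simp
  | cons a t ih => simp only [List.map_cons, List.prod_cons, ih]; group

/-- `y` is a conjugate of a relator (or inverse relator). -/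
def IsCR (R : Set (FreeGroup S)) (y : FreeGroup S) : Prop :=
  ∃ v r : FreeGroup S, (r ∈ R ∨ r⁻¹ ∈ R) ∧ y = v * r * v⁻¹

/-- `x` is a product of at most `m` conjugates of relators. -/
def Bnd (R : Set (FreeGroup S)) (x : FreeGroup S) (m : ℕ) : Prop :=
  ∃ l : List (FreeGroup S), l.length ≤ m ∧ (∀ y ∈ l, IsCR R y) ∧ x = l.prod

lemma Bnd_one (R : Set (FreeGroup S)) : Bnd R 1 0 :=
  ⟨[], by simp, by simp, by simp⟩

lemma Bnd_rel {R : Set (FreeGroup S)} {r : FreeGroup S} (h : r ∈ R ∨ r⁻¹ ∈ R) :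
    Bnd R r 1 :=
  ⟨[r], by simp, by rintro y hy; simp at hy; exact ⟨1, r, h, by simp [hy]⟩, by simp⟩

lemma Bnd_mul {R : Set (FreeGroup S)} {x y : FreeGroup S} {m n : ℕ}
    (hx : Bnd R x m) (hy : Bnd R y n) : Bnd R (x * y) (m + n) := by
  obtain ⟨l1, h1, c1, p1⟩ := hx
  obtain ⟨l2, h2, c2, p2⟩ := hy
  refine ⟨l1 ++ l2, by simp; omega, ?_, by simp [p1, p2]⟩
  intro z hz
  rcases List.mem_append.mp hz with h | h
  · exact c1 z h
  · exact c2 z h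

lemma Bnd_conj {R : Set (FreeGroup S)} {x : FreeGroup S} {m : ℕ} (g : FreeGroup S)
    (hx : Bnd R x m) : Bnd R (g * x * g⁻¹) m := by
  obtain ⟨l, h1, c1, p1⟩ := hx
  refine ⟨l.map (fun y => g * y * g⁻¹), by simpa using h1, ?_, ?_⟩
  · intro z hz
    obtain ⟨y, hy, rfl⟩ := List.mem_map.mp hz
    obtain ⟨v, r, hr, rfl⟩ := c1 y hy
    exact ⟨g * v, r, hr, by group⟩
  · rw [conj_prod, p1]

lemma Bnd_mono {R : Set (FreeGroup S)} {x : FreeGroup S} {m n : ℕ} (h : m ≤ n)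
    (hx : Bnd R x m) : Bnd R x n := by
  obtain ⟨l, h1, c1, p1⟩ := hx
  exact ⟨l, h1.trans h, c1, p1⟩

lemma Bnd_mem_normalClosure {R : Set (FreeGroup S)} {x : FreeGroup S} {m : ℕ}
    (hx : Bnd R x m) : x ∈ Subgroup.normalClosure R := by
  obtain ⟨l, -, c1, rfl⟩ := hx
  induction l with
  | nil => exact one_mem _
  | cons a t ih =>
    simp only [List.prod_cons]
    refine mul_mem ?_ (ih (fun y hy => c1 y (List.mem_cons_of_mem a hy)))
    obtain ⟨v, r, hr, rfl⟩ := c1 a List.mem_cons_self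
    have hrmem : r ∈ Subgroup.normalClosure R := by
      rcases hr with h | h
      · exact Subgroup.subset_normalClosure h
      · simpa using inv_mem (Subgroup.subset_normalClosure h)
    exact Subgroup.normalClosure_normal.conj_mem r hrmem v

lemma Bnd_chain {R : Set (FreeGroup S)} (D : ℕ → FreeGroup S) (m : ℕ → ℕ) {m0 : ℕ}
    (M : ℕ) (h0 : Bnd R (D 0) m0)
    (hstep : ∀ j < M, Bnd R ((D j)⁻¹ * D (j + 1)) (m j)) :
    Bnd R (D M) (m0 + ∑ j ∈ Finset.range M, m j) := by
  induction M with
  | zero => simpa using h0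
  | succ M ih =>
    have hD : D (M + 1) = D M * ((D M)⁻¹ * D (M + 1)) := by group
    rw [hD, Finset.sum_range_succ, ← add_assoc]
    exact Bnd_mul (ih (fun j hj => hstep j (by omega))) (hstep M (by omega))

end AuxDev

section Dist
variable {G : Type*} [Group G] {S : Set G}

lemma exists_word (hSsymm : S⁻¹ = S) (hSgen : Subgroup.closure S = ⊤) (g : G) :
    ∃ w : List S, wordProd S w = g := by
  have hg : g ∈ Subgroup.closure S := by rw [hSgen]; trivial
  induction hg using Subgroup.closure_induction with
  | mem x hx => exact ⟨[⟨x, hx⟩], by simp [wordProd]⟩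
  | one => exact ⟨[], by simp [wordProd]⟩
  | mul x y hx hy ihx ihy =>
    obtain ⟨u, hu⟩ := ihx; obtain ⟨v, hv⟩ := ihy
    exact ⟨u ++ v, by rw [wordProd_append, hu, hv]⟩
  | inv x hx ihx =>
    obtain ⟨u, hu⟩ := ihx
    exact ⟨revinv hSsymm u, by rw [wordProd_revinv, hu]⟩

lemma exists_wordDist (hSsymm : S⁻¹ = S) (hSgen : Subgroup.closure S = ⊤) (a b : G) :
    ∃ w : List S, w.length = wordDist S a b ∧ wordProd S w = b⁻¹ * a := by
  have hne : {n | ∃ w : List S, w.length = n ∧ wordProd S w = b⁻¹ * a}.Nonempty := by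
    obtain ⟨w, hw⟩ := exists_word hSsymm hSgen (b⁻¹ * a)
    exact ⟨w.length, w, rfl, hw⟩
  exact Nat.sInf_mem hne

lemma wordDist_le {a b : G} (w : List S) (h : wordProd S w = b⁻¹ * a) :
    wordDist S a b ≤ w.length :=
  Nat.sInf_le ⟨w, rfl, h⟩

lemma eq_of_wordDist_eq_zero (hSsymm : S⁻¹ = S) (hSgen : Subgroup.closure S = ⊤)
    {a b : G} (h : wordDist S a b = 0) : a = b := by
  obtain ⟨w, hl, hp⟩ := exists_wordDist hSsymm hSgen a b
  rw [h, List.length_eq_zero_iff] at hl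
  subst hl
  rw [wordProd_nil] at hp
  have h2 : b⁻¹ * a = 1 := hp.symm
  rw [inv_mul_eq_one] at h2
  exact h2.symm

lemma wordDist_triangle (hSsymm : S⁻¹ = S) (hSgen : Subgroup.closure S = ⊤)
    (a b c : G) : wordDist S a c ≤ wordDist S a b + wordDist S b c := by
  obtain ⟨w1, hl1, hp1⟩ := exists_wordDist hSsymm hSgen a b
  obtain ⟨w2, hl2, hp2⟩ := exists_wordDist hSsymm hSgen b c
  have := wordDist_le (a := a) (b := c) (w2 ++ w1) ?_
  · rw [List.length_append, hl1, hl2] at this; omega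
  · rw [wordProd_append, hp1, hp2]; group

lemma area_le_of_Bnd {R : Set (FreeGroup S)} (h1 : (1 : FreeGroup S) ∈ R)
    {w : List S} {m : ℕ} (h : Bnd R (wordToFree S w) m) : area S R w ≤ m := by
  obtain ⟨l, hlen, hcr, hprod⟩ := h
  apply Nat.sInf_le
  set l' : List (FreeGroup S) := l ++ List.replicate (m - l.length) 1 with hl'
  have hlen' : l'.length = m := by simp [hl']; omega
  have hcr' : ∀ y ∈ l', IsCR R y := by
    intro y hy
    rcases List.mem_append.mp hy with h | h
    · exact hcr y h
    · have : y = 1 := List.eq_of_mem_replicate h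
      exact ⟨1, 1, Or.inl h1, by simp [this]⟩
  have hprod' : wordToFree S w = l'.prod := by
    rw [hl', List.prod_append, List.prod_replicate, one_pow, mul_one, hprod]
  have key : ∀ i : Fin m, ∃ v r : FreeGroup S,
      (r ∈ R ∨ r⁻¹ ∈ R) ∧ l'.get (Fin.cast hlen'.symm i) = v * r * v⁻¹ := by
    intro i
    obtain ⟨v, r, hr, hy⟩ := hcr' _ (l'.get_mem _)
    exact ⟨v, r, hr, hy⟩
  choose v r hr hy using key
  refine ⟨v, r, hr, ?_⟩
  rw [hprod']
  congr 1
  have : List.ofFn (fun i : Fin m => v i * r i * (v i)⁻¹)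
      = List.ofFn (fun i : Fin m => l'.get (Fin.cast hlen'.symm i)) := by
    congr 1
    funext i
    exact (hy i).symm
  rw [this]
  apply List.ext_get
  · simp [hlen']
  · intro n hn1 hn2
    simp [List.get_ofFn]

end Dist

section Strip
variable {G : Type*} [Group G] {S : Set G}

lemma strip_lemma (hSsymm : S⁻¹ = S) (hSgen : Subgroup.closure S = ⊤)
    {L : Set (List S)} {k : ℕ}
    (hft : ∀ u ∈ L, ∀ v ∈ L,
      wordDist S (wordProd S u) (wordProd S v) ≤ 1 →
      ∀ i : ℕ, wordDist S (wordProd S (u.take i)) (wordProd S (v.take i)) ≤ k)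
    {R : Set (FreeGroup S)}
    (hR : R = {x : FreeGroup S | ∃ w : List S,
      w.length ≤ 2 * k + 2 ∧ wordProd S w = 1 ∧ wordToFree S w = x})
    {u v : List S} (hu : u ∈ L) (hv : v ∈ L) (s : S)
    (hs : wordProd S v = wordProd S u * s) :
    Bnd R (wordToFree S u * FreeGroup.of s * (wordToFree S v)⁻¹)
      (3 * max u.length v.length + 3) := by
  have hrel : ∀ w : List S, w.length ≤ 2 * k + 2 → wordProd S w = 1 →
      wordToFree S w ∈ R := by
    intro w h1 h2; rw [hR]; exact ⟨w, h1, h2, rfl⟩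
  have hd1 : wordDist S (wordProd S u) (wordProd S v) ≤ 1 := by
    have h := wordDist_le (a := wordProd S u) (b := wordProd S v) [sInv hSsymm s] ?_
    · simpa using h
    · rw [wordProd_singleton, sInv_coe, hs]; group
  have hftj := hft u hu v hv hd1
  have hz : ∀ j : ℕ, ∃ z : List S, z.length ≤ k ∧
      wordProd S z = (wordProd S (u.take j))⁻¹ * wordProd S (v.take j) := by
    intro j
    obtain ⟨z, hl, hp⟩ := exists_wordDist hSsymm hSgen
      (wordProd S (u.take j)) (wordProd S (v.take j))
    refine ⟨revinv hSsymm z, by rw [length_revinv, hl]; exact hftj j, ?_⟩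
    rw [wordProd_revinv, hp]; group
  choose c hclen hcprod using hz
  set M := max u.length v.length with hM
  set D : ℕ → FreeGroup S := fun j =>
    wordToFree S (u.take j) * wordToFree S (c j) * (wordToFree S (v.take j))⁻¹ with hD
  have h0 : Bnd R (D 0) 1 := by
    have hD0 : D 0 = wordToFree S (c 0) := by
      simp [hD, wordToFree_nil]
    rw [hD0]
    refine Bnd_rel (Or.inl (hrel _ (by have := hclen 0; omega) ?_))
    rw [hcprod 0]; simp [wordProd_nil]
  have hstep : ∀ j, j < M → Bnd R ((D j)⁻¹ * D (j + 1)) 3 := by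
    intro j hj
    set A : List S := (u.drop j).take 1 with hA
    set B : List S := (v.drop j).take 1 with hB
    have htu : u.take (j + 1) = u.take j ++ A := List.take_add
    have htv : v.take (j + 1) = v.take j ++ B := List.take_add
    have hAlen : A.length ≤ 1 := List.length_take_le 1 _
    have hBlen : B.length ≤ 1 := List.length_take_le 1 _
    have hr1 : wordToFree S (revinv hSsymm (c j) ++ c j) ∈ R := by
      apply hrel
      · rw [List.length_append, length_revinv]; have := hclen j; omega
      · rw [wordProd_append, wordProd_revinv]; group
    have hr3 : wordToFree S (B ++ revinv hSsymm B) ∈ R := by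
      apply hrel
      · rw [List.length_append, length_revinv]; omega
      · rw [wordProd_append, wordProd_revinv]; group
    have hprodA : wordProd S (u.take j) * wordProd S A = wordProd S (u.take (j + 1)) := by
      rw [htu, wordProd_append]
    have hprodB : wordProd S (v.take j) * wordProd S B = wordProd S (v.take (j + 1)) := by
      rw [htv, wordProd_append]
    have hr2 : wordToFree S (revinv hSsymm (c j) ++ (A ++ (c (j + 1) ++ revinv hSsymm B))) ∈ R := by
      apply hrel
      · simp only [List.length_append, length_revinv]
        have := hclen j; have := hclen (j + 1); omega
      · rw [wordProd_append, wordProd_append, wordProd_append, wordProd_revinv,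
          wordProd_revinv, hcprod j, hcprod (j + 1), ← hprodA, ← hprodB]
        group
    have hE : (D j)⁻¹ * D (j + 1) = wordToFree S (v.take j) *
        ((wordToFree S (revinv hSsymm (c j)) * wordToFree S (c j))⁻¹ *
          wordToFree S (revinv hSsymm (c j) ++ (A ++ (c (j + 1) ++ revinv hSsymm B))) *
          (wordToFree S B * wordToFree S (revinv hSsymm B))⁻¹) *
        (wordToFree S (v.take j))⁻¹ := by
      simp only [hD, htu, htv, wordToFree_append]
      group
    rw [hE]
    refine Bnd_conj _ (Bnd_mono (by norm_num) (Bnd_mul (Bnd_mul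
      (Bnd_rel (Or.inr (by rw [inv_inv, ← wordToFree_append]; exact hr1)))
      (Bnd_rel (Or.inl hr2)))
      (Bnd_rel (Or.inr (by rw [inv_inv, ← wordToFree_append]; exact hr3)))))
  have hDM : Bnd R (D M) (1 + 3 * M) := by
    have h := Bnd_chain D (fun _ => 3) M h0 hstep
    have hsum : ∑ _j ∈ Finset.range M, 3 = 3 * M := by
      rw [Finset.sum_const, Finset.card_range]; ring
    rwa [hsum] at h
  have hutM : u.take M = u := List.take_of_length_le (le_max_left _ _)
  have hvtM : v.take M = v := List.take_of_length_le (le_max_right _ _)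
  have hcM : wordProd S (c M) = (s : G) := by
    rw [hcprod M, hutM, hvtM, hs]; group
  have hrf1 : wordToFree S (revinv hSsymm (c M) ++ c M) ∈ R := by
    apply hrel
    · rw [List.length_append, length_revinv]; have := hclen M; omega
    · rw [wordProd_append, wordProd_revinv]; group
  have hrf : wordToFree S (revinv hSsymm (c M) ++ [s]) ∈ R := by
    apply hrel
    · rw [List.length_append, length_revinv]; have := hclen M
      simp only [List.length_singleton]; omega
    · rw [wordProd_append, wordProd_revinv, hcM, wordProd_singleton]; group
  have hF : Bnd R ((wordToFree S (c M))⁻¹ * FreeGroup.of s) 2 := by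
    have heq : (wordToFree S (c M))⁻¹ * FreeGroup.of s =
        (wordToFree S (revinv hSsymm (c M)) * wordToFree S (c M))⁻¹ *
          wordToFree S (revinv hSsymm (c M) ++ [s]) := by
      rw [wordToFree_append, wordToFree_singleton]; group
    rw [heq]
    exact Bnd_mul
      (Bnd_rel (Or.inr (by rw [inv_inv, ← wordToFree_append]; exact hrf1)))
      (Bnd_rel (Or.inl hrf))
  have hX : wordToFree S u * FreeGroup.of s * (wordToFree S v)⁻¹ =
      D M * (wordToFree S v * ((wordToFree S (c M))⁻¹ * FreeGroup.of s) *
        (wordToFree S v)⁻¹) := by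
    simp only [hD, hutM, hvtM]
    group
  rw [hX]
  exact Bnd_mono (by omega) (Bnd_mul hDM (Bnd_conj _ hF))

end Strip

section NfLen
variable {G : Type*} [Group G] {S : Set G}

lemma nf_length_le (hSsymm : S⁻¹ = S) (hSgen : Subgroup.closure S = ⊤)
    {L : Set (List S)} {K : ℕ}
    (hlen : ∀ u ∈ L, ∀ v ∈ L,
      wordDist S (wordProd S u) (wordProd S v) = 1 →
      |(u.length : ℤ) - (v.length : ℤ)| ≤ K)
    (nf : G → List S) (hnfL : ∀ g, nf g ∈ L) (hnfP : ∀ g, wordProd S (nf g) = g)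
    (g : G) : (nf g).length ≤ (nf 1).length + K * wordDist S g 1 := by
  obtain ⟨z, hzl, hzp⟩ := exists_wordDist hSsymm hSgen g 1
  rw [inv_one, one_mul] at hzp
  have claim : ∀ t, t ≤ z.length →
      (nf (wordProd S (z.take t))).length ≤ (nf 1).length + K * t := by
    intro t
    induction t with
    | zero => intro _; simp [wordProd_nil]
    | succ t ih =>
      intro ht
      have ht' : t ≤ z.length := by omega
      have iht := ih ht'
      set a := wordProd S (z.take t) with ha
      set b := wordProd S (z.take (t + 1)) with hb
      have hsplit : b = a * wordProd S ((z.drop t).take 1) := by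
        rw [hb, ha, ← wordProd_append, ← List.take_add]
      have hd : wordDist S b a ≤ 1 := by
        refine le_trans (wordDist_le (revinv hSsymm (revinv hSsymm ((z.drop t).take 1))) ?_) ?_
        · rw [wordProd_revinv, wordProd_revinv, inv_inv, hsplit]; group
        · rw [length_revinv, length_revinv]; exact List.length_take_le 1 _
      rcases Nat.eq_zero_or_pos (wordDist S b a) with h0 | hpos
      · have heq : b = a := eq_of_wordDist_eq_zero hSsymm hSgen h0
        rw [heq]
        calc (nf a).length ≤ (nf 1).length + K * t := iht
          _ ≤ (nf 1).length + K * (t + 1) := by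
              have : K * t ≤ K * (t + 1) := Nat.mul_le_mul_left K (by omega)
              omega
      · have h1 : wordDist S b a = 1 := le_antisymm hd hpos
        have habs := hlen (nf b) (hnfL b) (nf a) (hnfL a)
          (by rw [hnfP, hnfP]; exact h1)
        have hstep : (nf b).length ≤ (nf a).length + K := by
          have h2 := abs_le.mp habs
          omega
        calc (nf b).length ≤ (nf a).length + K := hstep
          _ ≤ ((nf 1).length + K * t) + K := by omega
          _ = (nf 1).length + K * (t + 1) := by ring
  have := claim z.length le_rfl
  rwa [List.take_length, hzp, hzl] at this

end NfLen

/-- If `μ : L → G` is bijective, `L` has the `k`-fellow-traveler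
property and lengths of `L`-words at `d_S`-distance one differ by at most `K`, then
with `R` the set of words of length at most `2k+2` representing the identity, the
normal closure of `R` is the kernel of `μ : F_S → G` and the quadratic radial
isoperimetric inequality holds. -/
theorem bijective_automatic_structure_quadratic_radial_isoperimetric
    {G : Type*} [Group G] (S : Set G)
    (hSfin : S.Finite) (hSsymm : S⁻¹ = S) (hSgen : Subgroup.closure S = ⊤)
    (L : Set (List S))
    -- the evaluation map `μ : L → G` is bijective
    (hbij : ∀ g : G, ∃! w, w ∈ L ∧ wordProd S w = g)
    (k K : ℕ) (hk : 0 < k) (hK : 0 < K)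
    -- (i) the `k`-fellow traveler property
    (hft : ∀ u ∈ L, ∀ v ∈ L,
      wordDist S (wordProd S u) (wordProd S v) ≤ 1 →
      ∀ i : ℕ, wordDist S (wordProd S (u.take i)) (wordProd S (v.take i)) ≤ k)
    -- (ii) lengths of words at distance one differ by at most `K`
    (hlen : ∀ u ∈ L, ∀ v ∈ L,
      wordDist S (wordProd S u) (wordProd S v) = 1 →
      |(u.length : ℤ) - (v.length : ℤ)| ≤ K)
    -- `R` is the set of all words over `S` of length at most `2k+2` representing `e`
    (R : Set (FreeGroup S))
    (hR : R = {x : FreeGroup S | ∃ w : List S,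
      w.length ≤ 2 * k + 2 ∧ wordProd S w = 1 ∧ wordToFree S w = x}) :
    Subgroup.normalClosure R = (muEval S).ker ∧
    ∃ C : ℝ, 0 < C ∧ ∀ w : List S, wordProd S w = 1 →
      (area S R w : ℝ) ≤ C * ∑ i ∈ Finset.range w.length,
        ((wordDist S (wordProd S (w.take (i + 1))) 1 : ℝ) + 1) := by
  classical
  choose nf hnfL hnfP using fun g : G => (hbij g).exists
  have hone : (1 : FreeGroup S) ∈ R := by
    rw [hR]; exact ⟨[], by simp, wordProd_nil, wordToFree_nil⟩
  set B := (nf 1).length with hB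
  set C : ℕ := 3 * B + 3 * K + 3 with hC
  have hnflen : ∀ g, (nf g).length ≤ B + K * wordDist S g 1 :=
    fun g => nf_length_le hSsymm hSgen hlen nf hnfL hnfP g
  -- the main filling result
  have hfill : ∀ w : List S, wordProd S w = 1 →
      Bnd R (wordToFree S w)
        (∑ i ∈ Finset.range w.length,
          (3 * max (nf (wordProd S (w.take i))).length
              (nf (wordProd S (w.take (i + 1)))).length + 3)) := by
    intro w hw
    set n := w.length with hn
    set p : ℕ → List S := fun i => nf (wordProd S (w.take i)) with hp
    set D : ℕ → FreeGroup S := fun i =>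
      wordToFree S (w.take i) * (wordToFree S (p i))⁻¹ * wordToFree S (p 0) with hD
    have h0 : Bnd R (D 0) 0 := by
      have hD0 : D 0 = 1 := by
        simp only [hD, List.take_zero, wordToFree_nil, one_mul]
        group
      rw [hD0]; exact Bnd_one R
    have hstep : ∀ i, i < n → Bnd R ((D i)⁻¹ * D (i + 1))
        (3 * max (p i).length (p (i + 1)).length + 3) := by
      intro i hi
      have hgetlt : i < w.length := hi
      set si : S := w.get ⟨i, hgetlt⟩ with hsi
      have htw : w.take (i + 1) = w.take i ++ [si] := by
        rw [List.take_succ, List.getElem?_eq_getElem hgetlt]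
        rfl
      have hps : wordProd S (p (i + 1)) = wordProd S (p i) * si := by
        simp only [hp, hnfP]
        rw [htw, wordProd_append, wordProd_singleton]
      have hXi := strip_lemma hSsymm hSgen hft hR (hnfL _) (hnfL _) si hps
      have hid : (D i)⁻¹ * D (i + 1) = (wordToFree S (p 0))⁻¹ *
          (wordToFree S (p i) * FreeGroup.of si * (wordToFree S (p (i + 1)))⁻¹) *
          ((wordToFree S (p 0))⁻¹)⁻¹ := by
        simp only [hD, htw, wordToFree_append, wordToFree_singleton]
        group
      rw [hid]
      exact Bnd_conj _ hXi
    have hchain := Bnd_chain D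
      (fun i => 3 * max (p i).length (p (i + 1)).length + 3) n h0 hstep
    have hpn : p n = p 0 := by
      simp only [hp]
      congr 1
      rw [hn, List.take_length, hw, List.take_zero, wordProd_nil]
    have hDn : D n = wordToFree S w := by
      simp only [hD, hpn]
      rw [hn, List.take_length, mul_assoc, inv_mul_cancel, mul_one]
    rw [hDn, zero_add] at hchain
    exact hchain
  constructor
  · -- normal closure equals kernel
    apply le_antisymm
    · apply Subgroup.normalClosure_le_normal
      rintro x hx
      rw [hR] at hx
      obtain ⟨w, -, hp1, rfl⟩ := hx
      rw [SetLike.mem_coe, MonoidHom.mem_ker, muEval_wordToFree, hp1]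
    · intro x hx
      rw [MonoidHom.mem_ker] at hx
      have hrep : ∀ y : FreeGroup S, ∃ l : List S,
          wordProd S l = muEval S y ∧
          y⁻¹ * wordToFree S l ∈ Subgroup.normalClosure R := by
        intro y
        induction y using FreeGroup.induction_on with
        | C1 => exact ⟨[], by simp [wordProd_nil], by
            rw [wordToFree_nil, inv_one, one_mul]; exact one_mem _⟩
        | of x =>
          refine ⟨[x], ?_, ?_⟩
          · rw [wordProd_singleton]
            exact (FreeGroup.lift_apply_of).symm
          · rw [wordToFree_singleton]
            have : (FreeGroup.of x)⁻¹ * FreeGroup.of x = 1 := by group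
            rw [this]
            exact one_mem _
        | inv_of x _ =>
          refine ⟨[sInv hSsymm x], ?_, ?_⟩
          · rw [wordProd_singleton, sInv_coe, map_inv]
            congr 1
            exact (FreeGroup.lift_apply_of).symm
          · rw [wordToFree_singleton]
            have hmem : FreeGroup.of x * FreeGroup.of (sInv hSsymm x) ∈ R := by
              rw [hR]
              refine ⟨[x, sInv hSsymm x], by simp, ?_, ?_⟩
              · show wordProd S ([x] ++ [sInv hSsymm x]) = 1
                rw [wordProd_append, wordProd_singleton, wordProd_singleton, sInv_coe]
                group
              · show wordToFree S ([x] ++ [sInv hSsymm x]) = _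
                rw [wordToFree_append, wordToFree_singleton, wordToFree_singleton]
            have : ((FreeGroup.of x : FreeGroup S)⁻¹)⁻¹ * FreeGroup.of (sInv hSsymm x)
                = FreeGroup.of x * FreeGroup.of (sInv hSsymm x) := by
              rw [inv_inv]
            rw [this]
            exact Subgroup.subset_normalClosure hmem
        | mul x y ihx ihy =>
          obtain ⟨lx, hx1, hx2⟩ := ihx
          obtain ⟨ly, hy1, hy2⟩ := ihy
          refine ⟨lx ++ ly, ?_, ?_⟩
          · rw [wordProd_append, hx1, hy1, map_mul]
          · have hidm : (x * y)⁻¹ * wordToFree S (lx ++ ly) =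
                (y⁻¹ * (x⁻¹ * wordToFree S lx) * (y⁻¹)⁻¹) *
                (y⁻¹ * wordToFree S ly) := by
              rw [wordToFree_append]; group
            rw [hidm]
            exact mul_mem (Subgroup.normalClosure_normal.conj_mem _ hx2 _) hy2
      obtain ⟨l, hl1, hl2⟩ := hrep x
      rw [hx] at hl1
      have hWl : wordToFree S l ∈ Subgroup.normalClosure R :=
        Bnd_mem_normalClosure (hfill l hl1)
      have hxinv : x⁻¹ ∈ Subgroup.normalClosure R := by
        have := mul_mem hl2 (inv_mem hWl)
        simpa using this
      simpa using inv_mem hxinv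
  · -- the isoperimetric constant
    refine ⟨(C : ℝ), by exact_mod_cast (show 0 < C by omega), ?_⟩
    intro w hw
    have harea := area_le_of_Bnd hone (hfill w hw)
    have hptw : ∀ i ∈ Finset.range w.length,
        3 * max (nf (wordProd S (w.take i))).length
          (nf (wordProd S (w.take (i + 1)))).length + 3 ≤
        C * (wordDist S (wordProd S (w.take (i + 1))) 1 + 1) := by
      intro i hi
      set d := wordDist S (wordProd S (w.take (i + 1))) 1 with hd
      have h1 : (nf (wordProd S (w.take (i + 1)))).length ≤ B + K * d := hnflen _
      have hone' : wordDist S (wordProd S (w.take i)) (wordProd S (w.take (i + 1))) ≤ 1 := by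
        have hsplit : wordProd S (w.take (i + 1)) =
            wordProd S (w.take i) * wordProd S ((w.drop i).take 1) := by
          rw [← wordProd_append, ← List.take_add]
        refine le_trans (wordDist_le (revinv hSsymm ((w.drop i).take 1)) ?_) ?_
        · rw [wordProd_revinv, hsplit]; group
        · rw [length_revinv]; exact List.length_take_le 1 _
      have hdd : wordDist S (wordProd S (w.take i)) 1 ≤ d + 1 := by
        have htri := wordDist_triangle hSsymm hSgen (wordProd S (w.take i))
          (wordProd S (w.take (i + 1))) 1
        omega
      have h0' : (nf (wordProd S (w.take i))).length ≤ B + K * (d + 1) := by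
        refine le_trans (hnflen _) ?_
        have : K * wordDist S (wordProd S (w.take i)) 1 ≤ K * (d + 1) :=
          Nat.mul_le_mul_left K hdd
        omega
      have hmax : max (nf (wordProd S (w.take i))).length
          (nf (wordProd S (w.take (i + 1)))).length ≤ B + K * (d + 1) := by
        refine max_le h0' (h1.trans ?_)
        have : K * d ≤ K * (d + 1) := Nat.mul_le_mul_left K (by omega)
        omega
      calc 3 * max (nf (wordProd S (w.take i))).length
            (nf (wordProd S (w.take (i + 1)))).length + 3
          ≤ 3 * (B + K * (d + 1)) + 3 := by omega
        _ ≤ C * (d + 1) := by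
            rw [hC]
            have h3 : 1 ≤ d + 1 := by omega
            nlinarith
    have htotal : area S R w ≤
        C * ∑ i ∈ Finset.range w.length,
          (wordDist S (wordProd S (w.take (i + 1))) 1 + 1) := by
      refine harea.trans ?_
      rw [Finset.mul_sum]
      exact Finset.sum_le_sum hptw
    calc (area S R w : ℝ)
        ≤ ((C * ∑ i ∈ Finset.range w.length,
            (wordDist S (wordProd S (w.take (i + 1))) 1 + 1) : ℕ) : ℝ) := by
          exact_mod_cast htotal
      _ = (C : ℝ) * ∑ i ∈ Finset.range w.length,
            ((wordDist S (wordProd S (w.take (i + 1))) 1 : ℝ) + 1) := by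
          push_cast; ring
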